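/- Let (x_w)_{w∈W} be a family of elements of H and x := Σ_{w∈W} h_w ⊗ x_w ∈ H ⊗_R H. For each s ∈ S, x belongs to N_s if and only if x_{ws} = −h_s⁻¹·x_w for every w ∈ W with ℓ(ws) > ℓ(w). -/

import Mathlib

open scoped Classical TensorProduct

namespace OkuyamaHecke

/-- For an element `hs` of an `R`-algebra `H`, the `R`-submodule of `H ⊗[R] H`
spanned by the elements `(x·hs) ⊗ y - x ⊗ (hs·y)` (for `hs = h_s` this is the
kernel of the canonical map `H ⊗_R H → H ⊗_{H_s} H`). -/
def Ns (R : Type) [CommRing R] (H : Type) [Ring H] [Algebra R H] (hs : H) :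
    Submodule R (H ⊗[R] H) :=
  Submodule.span R
    {z : H ⊗[R] H | ∃ x y : H, z = (x * hs) ⊗ₜ[R] y - x ⊗ₜ[R] (hs * y)}

end OkuyamaHecke

open OkuyamaHecke

/-- Remark 18 of [Cabanes, On Okuyama's theorems about
Alvis-Curtis duality].  For `x = Σ_w h_w ⊗ x_w ∈ H ⊗_R H` and `s ∈ S`, one has
`x ∈ N_s` if and only if `x_{ws} = -h_s⁻¹ x_w` whenever `ℓ(ws) > ℓ(w)`. -/
theorem okuyama_statement12
    {B : Type} {W : Type} [Group W] [Fintype W] {M : CoxeterMatrix B}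
    (cs : CoxeterSystem M W)
    (R : Type) [CommRing R] (H : Type) [Ring H] [Algebra R H]
    (q : B → Rˣ)
    (hq : ∀ s t : B, IsConj (cs.simple s) (cs.simple t) → q s = q t)
    (h : W → H) (bW : Module.Basis W R H) (hbW : ∀ w : W, bW w = h w)
    (h1 : h 1 = 1)
    (hmul : ∀ w w' : W, cs.length (w * w') = cs.length w + cs.length w' →
        h w * h w' = h (w * w'))
    (hquad : ∀ s : B, h (cs.simple s) * h (cs.simple s) =
        ((q s : R) - 1) • h (cs.simple s) + (q s : R) • (1 : H))
    (hunit : ∀ w : W, IsUnit (h w))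
    (x_ : W → H) (s : B) :
    (∑ w : W, h w ⊗ₜ[R] x_ w) ∈ Ns R H (h (cs.simple s)) ↔
      ∀ w : W, cs.length (w * cs.simple s) > cs.length w →
        x_ (w * cs.simple s) = -(Ring.inverse (h (cs.simple s)) * x_ w) := by
  set σ := cs.simple s with hσdef
  set hs := h σ with hhsdef
  set hsi := Ring.inverse hs with hhsidef
  have hsu : IsUnit hs := hunit σ
  have hinv1 : hsi * hs = 1 := Ring.inverse_mul_cancel _ hsu
  have hinv2 : hs * hsi = 1 := Ring.mul_inverse_cancel _ hsu
  have hσσ : σ * σ = 1 := cs.simple_mul_simple_self s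
  have hkey : ∀ w : W, w * σ * σ = w := fun w => by rw [mul_assoc, hσσ, mul_one]
  have hlenσ : cs.length σ = 1 := cs.length_simple s
  -- the quadratic relation rewritten
  have hsb : ∀ b : H, hs * b = ((q s : R) - 1) • b + (q s : R) • (hsi * b) := by
    intro b
    have h2 : hs = ((q s : R) - 1) • (1 : H) + (q s : R) • hsi := by
      have := congrArg (· * hsi) (show hs * hs = ((q s : R) - 1) • hs + (q s : R) • (1 : H) from hquad s)
      simp only [add_mul, smul_mul_assoc, mul_assoc, hinv2, mul_one, one_mul] at this
      simpa using this
    calc hs * b = (((q s : R) - 1) • (1 : H) + (q s : R) • hsi) * b := by rw [← h2]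
      _ = ((q s : R) - 1) • b + (q s : R) • (hsi * b) := by
          rw [add_mul, smul_mul_assoc, smul_mul_assoc, one_mul]
  -- multiplication by hs on basis elements
  have hmul_case : ∀ u : W, h u * hs =
      if cs.length (u * σ) > cs.length u then h (u * σ)
      else ((q s : R) - 1) • h u + (q s : R) • h (u * σ) := by
    intro u
    have hdich := cs.length_mul_simple u s
    rw [← hσdef] at hdich
    rcases hdich with hgt | hlt
    · rw [if_pos (by omega)]
      exact hmul u σ (by omega)
    · rw [if_neg (by omega)]
      have hv : h (u * σ) * hs = h u := by
        have := hmul (u * σ) σ ?_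
        · rwa [hkey] at this
        · rw [hkey, hlenσ]
          omega
      calc h u * hs = h (u * σ) * hs * hs := by rw [hv]
        _ = h (u * σ) * (hs * hs) := by rw [mul_assoc]
        _ = h (u * σ) * (((q s : R) - 1) • hs + (q s : R) • (1 : H)) := by rw [hquad]
        _ = ((q s : R) - 1) • (h (u * σ) * hs) + (q s : R) • h (u * σ) := by
            rw [mul_add, mul_smul_comm, mul_smul_comm, mul_one]
        _ = ((q s : R) - 1) • h u + (q s : R) • h (u * σ) := by rw [hv]
  -- coordinates of basis elements
  have hrepr : ∀ u w : W, bW.repr (h u) w = if u = w then (1 : R) else 0 := by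
    intro u w
    rw [← hbW, bW.repr_self, Finsupp.single_apply]
  -- the two key coordinate identities
  have coordA : ∀ w : W, cs.length (w * σ) > cs.length w →
      ∀ a : H, bW.repr (a * hs) w = (q s : R) * bW.repr a (w * σ) := by
    intro w hw a
    have : (bW.coord w).comp (LinearMap.mulRight R hs)
        = (q s : R) • bW.coord (w * σ) := by
      apply bW.ext
      intro u
      simp only [LinearMap.comp_apply, LinearMap.mulRight_apply, LinearMap.smul_apply,
        Module.Basis.coord_apply, hbW, smul_eq_mul]
      rw [hmul_case u]
      by_cases hc : cs.length (u * σ) > cs.length u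
      · rw [if_pos hc, hrepr, hrepr]
        have h3 : ¬ (u * σ = w) := by
          intro he
          have : u = w * σ := by rw [← he, hkey]
          subst this
          rw [hkey] at hc
          omega
        have h4 : ¬ (u = w * σ) := by
          intro he
          subst he
          rw [hkey] at hc
          omega
        rw [if_neg h3, if_neg h4, mul_zero]
      · rw [if_neg hc]
        simp only [map_add, map_smul, Finsupp.add_apply, Finsupp.smul_apply, hrepr,
          smul_eq_mul]
        have h3 : ¬ (u = w) := by
          intro he; subst he; omega
        have h2 : (u * σ = w) ↔ (u = w * σ) := by
          constructor
          · intro he; rw [← he, hkey]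
          · intro he; rw [he, hkey]
        rw [if_neg h3, mul_zero, zero_add]
        by_cases h5 : u = w * σ
        · rw [if_pos (h2.mpr h5), if_pos h5]
        · rw [if_neg (fun he => h5 (h2.mp he)), if_neg h5]
    have := congrArg (fun f => f a) this
    simpa [Module.Basis.coord_apply] using this
  have coordB : ∀ w : W, cs.length (w * σ) > cs.length w →
      ∀ a : H, bW.repr (a * hs) (w * σ)
        = bW.repr a w + ((q s : R) - 1) * bW.repr a (w * σ) := by
    intro w hw a
    have : (bW.coord (w * σ)).comp (LinearMap.mulRight R hs)
        = bW.coord w + ((q s : R) - 1) • bW.coord (w * σ) := by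
      apply bW.ext
      intro u
      simp only [LinearMap.comp_apply, LinearMap.mulRight_apply, LinearMap.add_apply,
        LinearMap.smul_apply, Module.Basis.coord_apply, hbW, smul_eq_mul]
      rw [hmul_case u]
      have h2 : (u * σ = w * σ) ↔ (u = w) := by
        constructor
        · intro he
          have := congrArg (· * σ) he
          simpa [hkey] using this
        · intro he; rw [he]
      by_cases hc : cs.length (u * σ) > cs.length u
      · rw [if_pos hc, hrepr, hrepr, hrepr]
        have h3 : ¬ (u = w * σ) := by
          intro he; subst he; rw [hkey] at hc; omega
        rw [if_neg h3, mul_zero, add_zero]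
        by_cases h4 : u = w
        · rw [if_pos (h2.mpr h4), if_pos h4]
        · rw [if_neg (fun he => h4 (h2.mp he)), if_neg h4]
      · rw [if_neg hc]
        simp only [map_add, map_smul, Finsupp.add_apply, Finsupp.smul_apply, hrepr,
          smul_eq_mul]
        have h3 : ¬ (u * σ = w * σ) := by
          intro he
          have := h2.mp he
          subst this
          omega
        have h4 : ¬ (u = w) := by intro he; subst he; omega
        rw [if_neg h3, if_neg h4, mul_zero, add_zero, zero_add]
    have := congrArg (fun f => f a) this
    simpa [Module.Basis.coord_apply] using this
  constructor
  · -- forward direction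
    intro hmem w hw
    -- the detecting linear map
    set F : H ⊗[R] H →ₗ[R] H := TensorProduct.lift
      ((bW.coord (w * σ)).smulRight (LinearMap.id : H →ₗ[R] H)
        + (bW.coord w).smulRight (LinearMap.mulLeft R hsi)) with hFdef
    have hFtmul : ∀ a b : H, F (a ⊗ₜ[R] b)
        = bW.repr a (w * σ) • b + bW.repr a w • (hsi * b) := by
      intro a b
      simp [hFdef, TensorProduct.lift.tmul, Module.Basis.coord_apply]
    -- F vanishes on Ns
    have hFzero : ∀ z ∈ Ns R H hs, F z = 0 := by
      intro z hz
      induction hz using Submodule.span_induction with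
      | mem z hz =>
          obtain ⟨a, b, rfl⟩ := hz
          rw [map_sub, hFtmul, hFtmul]
          rw [coordA w hw a, coordB w hw a]
          have e1 : hsi * (hs * b) = b := by rw [← mul_assoc, hinv1, one_mul]
          rw [e1, hsb b]
          rw [sub_eq_zero]
          module
      | zero => simp
      | add _ _ _ _ ih1 ih2 => rw [map_add, ih1, ih2, add_zero]
      | smul r _ _ ih => rw [map_smul, ih, smul_zero]
    have hFx : F (∑ u : W, h u ⊗ₜ[R] x_ u) = x_ (w * σ) + hsi * x_ w := by
      rw [map_sum]
      have hterm : ∀ u : W, F (h u ⊗ₜ[R] x_ u)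
          = (if u = w * σ then x_ u else 0) + (if u = w then hsi * x_ u else 0) := by
        intro u
        rw [hFtmul, hrepr, hrepr]
        by_cases h3 : u = w * σ <;> by_cases h4 : u = w <;>
          simp [h3, h4]
      rw [Finset.sum_congr rfl (fun u _ => hterm u), Finset.sum_add_distrib,
        Finset.sum_ite_eq' Finset.univ (w * σ) (fun u => x_ u),
        Finset.sum_ite_eq' Finset.univ w (fun u => hsi * x_ u)]
      simp
    have hz := hFzero _ hmem
    rw [hFx] at hz
    exact eq_neg_of_add_eq_zero_left hz
  · -- backward direction
    intro hx
    have hsplit : (∑ u : W, h u ⊗ₜ[R] x_ u)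
        = ∑ u ∈ Finset.univ.filter (fun u => cs.length (u * σ) > cs.length u),
            (h u ⊗ₜ[R] x_ u + h (u * σ) ⊗ₜ[R] x_ (u * σ)) := by
      rw [Finset.sum_add_distrib]
      rw [← Finset.sum_filter_add_sum_filter_not Finset.univ
        (fun u => cs.length (u * σ) > cs.length u) (fun u => h u ⊗ₜ[R] x_ u)]
      congr 1
      apply Finset.sum_nbij' (fun u => u * σ) (fun u => u * σ)
      · intro u hu
        simp only [Finset.mem_filter, Finset.mem_univ, true_and, not_lt] at hu ⊢
        rw [hkey]
        have hne := cs.length_mul_simple_ne u s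
        rw [← hσdef] at hne
        omega
      · intro u hu
        simp only [Finset.mem_filter, Finset.mem_univ, true_and, not_lt] at hu ⊢
        rw [hkey]
        omega
      · intro u _; exact hkey u
      · intro u _; exact hkey u
      · intro u _; rw [hkey]
    rw [hsplit]
    apply Submodule.sum_mem
    intro u hu
    simp only [Finset.mem_filter, Finset.mem_univ, true_and] at hu
    have hxu : x_ (u * σ) = -(hsi * x_ u) := hx u hu
    have hhu : h (u * σ) = h u * hs := by
      refine (hmul u σ ?_).symm
      have hd := cs.length_mul_simple u s
      rw [← hσdef] at hd
      rw [hlenσ]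
      omega
    have hgen : (h u * hs) ⊗ₜ[R] (hsi * x_ u) - h u ⊗ₜ[R] (hs * (hsi * x_ u))
        ∈ Ns R H hs := Submodule.subset_span ⟨h u, hsi * x_ u, rfl⟩
    have e1 : hs * (hsi * x_ u) = x_ u := by rw [← mul_assoc, hinv2, one_mul]
    have hterm : h u ⊗ₜ[R] x_ u + h (u * σ) ⊗ₜ[R] x_ (u * σ)
        = -((h u * hs) ⊗ₜ[R] (hsi * x_ u) - h u ⊗ₜ[R] (hs * (hsi * x_ u))) := by
      rw [hxu, hhu, e1, TensorProduct.tmul_neg]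
      abel
    rw [hterm]
    exact Submodule.neg_mem _ hgen
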